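/- The set of Pauli strings appearing in the binary encoding of the single-oscillator position operator x (for d = 2^m levels) can be partitioned into commuting collections measurable in d − 1 = 2^m − 1 independent measurement bases: for each k ∈ {0,...,m−1}, the terms with rightmost X/Y block of length k+1 require 2^k bases, and ∑_{k=0}^{m−1} 2^k = 2^m − 1. -/

import Mathlib

open Matrix Finset

/-- The four single-qubit Pauli matrices: I, X, Y, Z. -/
noncomputable def pauli : Fin 4 → Matrix (Fin 2) (Fin 2) ℂ :=
  ![1, !![0, 1; 1, 0], !![0, -Complex.I; Complex.I, 0], !![1, 0; 0, -1]]

/-- An `m`-qubit Pauli string. -/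
noncomputable def pauliString {m : ℕ} (s : Fin m → Fin 4) :
    Matrix (Fin m → Fin 2) (Fin m → Fin 2) ℂ :=
  Matrix.of fun b b' => ∏ i, pauli (s i) (b i) (b' i)

/-- The integer encoded by a bit string (qubit `i` carries bit `i`, LSB at `i = 0`). -/
def bval {m : ℕ} (b : Fin m → Fin 2) : ℕ := ∑ i : Fin m, 2 ^ (i : ℕ) * (b i : ℕ)

/-- Matrix elements of the truncated position operator in the Fock basis. -/
noncomputable def xc (a b : ℕ) : ℂ :=
  if a = b + 1 then (Real.sqrt (b + 1) : ℂ)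
  else if b = a + 1 then (Real.sqrt (a + 1) : ℂ) else 0

/-- The binary-encoded position operator of a `d = 2^m` level oscillator on `m` qubits. -/
noncomputable def xEnc (m : ℕ) : Matrix (Fin m → Fin 2) (Fin m → Fin 2) ℂ :=
  Matrix.of fun b b' => xc (bval b) (bval b')

/-- A measurement basis `b : Fin m → Fin 4` (all entries in {X, Y, Z}, i.e. non-identity)
covers a Pauli string `s` if it agrees with `s` on every qubit where `s` is not the
identity; then `s` can be measured in basis `b`. -/
def Covers {m : ℕ} (b s : Fin m → Fin 4) : Prop :=
  ∀ i, s i ≠ 0 → b i = s i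

/-! ### Auxiliary lemmas on Pauli matrices -/

lemma pauli_conj (p : Fin 4) (x y : Fin 2) : (starRingEnd ℂ) (pauli p x y) = pauli p y x := by
  fin_cases p <;> fin_cases x <;> fin_cases y <;> simp [pauli, Matrix.one_apply]

lemma pauli_conj_self (p : Fin 4) (x y : Fin 2) :
    (starRingEnd ℂ) (pauli p x y) = (if p = 2 then -1 else 1) * pauli p x y := by
  fin_cases p <;> fin_cases x <;> fin_cases y <;> simp [pauli, Matrix.one_apply]

lemma pauli_ne_zero_iff (p : Fin 4) (x y : Fin 2) (h : pauli p x y ≠ 0) :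
    ((p = 1 ∨ p = 2) ↔ x ≠ y) := by
  fin_cases p <;> fin_cases x <;> fin_cases y <;> simp_all [pauli, Matrix.one_apply]

lemma pauliString_conj {m : ℕ} (s : Fin m → Fin 4) (b b' : Fin m → Fin 2) :
    (starRingEnd ℂ) (pauliString s b b') = pauliString s b' b := by
  unfold pauliString
  simp only [Matrix.of_apply, map_prod]
  exact Finset.prod_congr rfl fun i _ => pauli_conj _ _ _

lemma pauliString_parity {m : ℕ} (s : Fin m → Fin 4) (b b' : Fin m → Fin 2) :
    (starRingEnd ℂ) (pauliString s b b') =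
      (-1) ^ ((univ.filter (fun i => s i = 2)).card) * pauliString s b b' := by
  unfold pauliString
  simp only [Matrix.of_apply, map_prod]
  have : ∀ i ∈ (univ : Finset (Fin m)), (starRingEnd ℂ) (pauli (s i) (b i) (b' i)) =
      (if s i = 2 then (-1:ℂ) else 1) * pauli (s i) (b i) (b' i) :=
    fun i _ => pauli_conj_self _ _ _
  rw [Finset.prod_congr rfl this, Finset.prod_mul_distrib, Finset.prod_ite,
    Finset.prod_const, Finset.prod_const, one_pow, mul_one]

/-! ### Auxiliary lemmas on `xc` and the trace -/

lemma xc_symm (a b : ℕ) : xc a b = xc b a := by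
  unfold xc; split_ifs <;> first | rfl | omega

lemma xc_ne_zero {a b : ℕ} (h : xc a b ≠ 0) : a = b + 1 ∨ b = a + 1 := by
  unfold xc at h
  split_ifs at h <;> tauto

lemma trace_expand {m : ℕ} (s : Fin m → Fin 4) :
    Matrix.trace (pauliString s * xEnc m) =
      ∑ b : Fin m → Fin 2, ∑ b' : Fin m → Fin 2,
        pauliString s b b' * xc (bval b') (bval b) := by
  simp [Matrix.trace, Matrix.mul_apply, Matrix.diag, xEnc]

lemma trace_zero_of_odd {m : ℕ} (s : Fin m → Fin 4)
    (hodd : ¬ Even ((univ.filter (fun i => s i = 2)).card)) :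
    Matrix.trace (pauliString s * xEnc m) = 0 := by
  have key : ∀ b b' : Fin m → Fin 2,
      pauliString s b' b * xc (bval b) (bval b') =
        -(pauliString s b b' * xc (bval b') (bval b)) := by
    intro b b'
    have h1 : pauliString s b' b = -pauliString s b b' := by
      rw [← pauliString_conj, pauliString_parity,
        (Nat.not_even_iff_odd.mp hodd).neg_one_pow]
      ring
    rw [h1, xc_symm]
    ring
  have h2 := trace_expand s
  have h3 : Matrix.trace (pauliString s * xEnc m) =
      ∑ b : Fin m → Fin 2, ∑ b' : Fin m → Fin 2,
        pauliString s b' b * xc (bval b) (bval b') := by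
    rw [h2]; exact Finset.sum_comm
  rw [h2] at h3 ⊢
  have h4 : (∑ b : Fin m → Fin 2, ∑ b' : Fin m → Fin 2,
      pauliString s b' b * xc (bval b) (bval b')) =
      -∑ b : Fin m → Fin 2, ∑ b' : Fin m → Fin 2,
        pauliString s b b' * xc (bval b') (bval b) := by
    rw [← Finset.sum_neg_distrib]
    refine Finset.sum_congr rfl fun b _ => ?_
    rw [← Finset.sum_neg_distrib]
    exact Finset.sum_congr rfl fun b' _ => key b b'
  rw [h4] at h3
  linear_combination (1/2 : ℂ) * h3

/-! ### Binary arithmetic of `bval` -/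

lemma bval_succ {m : ℕ} (b : Fin (m+1) → Fin 2) :
    bval b = (b 0 : ℕ) + 2 * bval (b ∘ Fin.succ) := by
  unfold bval
  rw [Fin.sum_univ_succ, Finset.mul_sum]
  simp only [Fin.val_zero, pow_zero, one_mul, Fin.val_succ, Function.comp_apply]
  congr 1
  apply Finset.sum_congr rfl; intro i _; rw [pow_succ]; ring

lemma bval_div {m : ℕ} (b : Fin m → Fin 2) (j : Fin m) :
    bval b / 2 ^ (j : ℕ) % 2 = (b j : ℕ) := by
  induction m with
  | zero => exact absurd j.isLt (by omega)
  | succ m ih =>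
    rw [bval_succ]
    rcases Fin.eq_zero_or_eq_succ j with rfl | ⟨j', rfl⟩
    · have := (b 0).isLt
      simp only [Fin.val_zero, pow_zero, Nat.div_one]
      omega
    · have h2 : (2:ℕ) ^ ((j'.succ : Fin (m+1)) : ℕ) = 2 * 2 ^ (j' : ℕ) := by
        rw [Fin.val_succ, pow_succ]; ring
      rw [h2, ← Nat.div_div_eq_div_mul]
      have h0 := (b 0).isLt
      have h3 : ((b 0 : ℕ) + 2 * bval (b ∘ Fin.succ)) / 2 = bval (b ∘ Fin.succ) := by omega
      rw [h3, ih (b ∘ Fin.succ) j']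
      rfl

lemma succ_div_mod (n M r : ℕ) (hr1 : n % M = r) (hr : r + 1 < M) :
    (n+1) / M = n / M ∧ (n+1) % M = n % M + 1 := by
  have hM : 0 < M := by omega
  have hq := Nat.div_add_mod n M
  set q := n / M with hq'
  have h3 : (n+1) / M = q := by
    have he : n + 1 = M*q + (r+1) := by omega
    rw [he, Nat.mul_add_div hM, Nat.div_eq_of_lt hr]
    omega
  have h4 := Nat.div_add_mod (n+1) M
  rw [h3] at h4
  omega

lemma bit_from_mod {m : ℕ} (b : Fin m → Fin 2) (i : Fin m) :
    (b i : ℕ) = bval b % (2 ^ ((i:ℕ)+1)) / 2 ^ (i:ℕ) := by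
  rw [← bval_div b i, pow_succ, Nat.mod_mul_right_div_self]

lemma bit_agree_above {m : ℕ} (b b' : Fin m → Fin 2) (h : bval b' = bval b + 1)
    (i : Fin m) (hi : b i = b' i) : ∀ j : Fin m, i ≤ j → b j = b' j := by
  set n := bval b with hn
  set p := (2:ℕ) ^ (i:ℕ) with hp
  have hppos : 0 < p := Nat.pow_pos (by norm_num)
  set M := (2:ℕ) ^ ((i:ℕ)+1) with hM
  have hM2 : M = 2 * p := by rw [hM, hp, pow_succ]; ring
  have hb := bit_from_mod b i
  have hb' := bit_from_mod b' i
  rw [h] at hb'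
  have hnc : n % M + 1 < M := by
    by_contra hc
    have h1 : n % M = M - 1 := by have := Nat.mod_lt n (show 0 < M by omega); omega
    have hbi : (b i : ℕ) = 1 := by
      rw [hb, h1]
      apply Nat.div_eq_of_lt_le <;> omega
    have h2 : (n + 1) % M = 0 := by
      have he : (n + 1) % M = (n % M + 1) % M := by
        conv_lhs => rw [← Nat.div_add_mod n M]
        rw [Nat.add_assoc, Nat.mul_add_mod]
      rw [he, h1]
      have h1' : M - 1 + 1 = M := by omega
      rw [h1', Nat.mod_self]
    have hbi' : (b' i : ℕ) = 0 := by rw [hb', h2]; simp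
    rw [hi] at hbi; omega
  obtain ⟨hdiv, _⟩ := succ_div_mod n M (n % M) rfl hnc
  intro j hij
  rcases eq_or_lt_of_le hij with rfl | hlt
  · exact hi
  · have hvj : ((i:ℕ)+1) ≤ (j:ℕ) := hlt
    have hpow : (2:ℕ) ^ (j:ℕ) = M * 2 ^ ((j:ℕ) - ((i:ℕ)+1)) := by
      rw [hM, ← pow_add]
      congr 1
      omega
    have e1 : (b j : ℕ) = n / M / 2 ^ ((j:ℕ) - ((i:ℕ)+1)) % 2 := by
      rw [← bval_div b j, hpow, ← Nat.div_div_eq_div_mul]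
    have e2 : (b' j : ℕ) = (n+1) / M / 2 ^ ((j:ℕ) - ((i:ℕ)+1)) % 2 := by
      rw [← bval_div b' j, h, hpow, ← Nat.div_div_eq_div_mul]
    rw [hdiv] at e2
    exact Fin.val_injective (by omega)

lemma initseg {m : ℕ} (b b' : Fin m → Fin 2) (h : bval b' = bval b + 1) :
    ∃ k : Fin m, ∀ i, (b i ≠ b' i ↔ i ≤ k) := by
  have hne : b ≠ b' := by
    intro he; rw [he] at h; omega
  have hF : (univ.filter (fun i => b i ≠ b' i)).Nonempty := by
    rw [Finset.filter_nonempty_iff]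
    simpa [Function.ne_iff] using hne
  set F := univ.filter (fun i => b i ≠ b' i) with hFdef
  refine ⟨F.max' hF, fun i => ⟨fun hd => Finset.le_max' F i (by simp [hFdef, hd]),
    fun hle hd => ?_⟩⟩
  have hk : F.max' hF ∈ F := Finset.max'_mem F hF
  have hk2 := Finset.mem_filter.mp hk
  exact hk2.2 (bit_agree_above b b' h i hd _ hle)

/-! ### The measurement bases -/

def supp {m : ℕ} (v : Fin m → Fin 2) : Finset (Fin m) := univ.filter (fun i => v i = 1)

noncomputable def basisOf {m : ℕ} (v : Fin m → Fin 2) : Fin m → Fin 4 :=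
  if h : (supp v).Nonempty then
    fun i =>
      if (supp v).max' h < i then 3
      else if i < (supp v).max' h then (if v i = 1 then 2 else 1)
      else (if Even (supp v).card then 2 else 1)
  else fun _ => 3

lemma fin2_eq_zero (v : Fin 2) (h : v ≠ 1) : v = 0 := by omega

lemma supp_nonempty {m : ℕ} {v : Fin m → Fin 2} (hv : v ≠ 0) : (supp v).Nonempty := by
  rw [supp, Finset.filter_nonempty_iff]
  rw [Function.ne_iff] at hv
  obtain ⟨i, hi⟩ := hv
  refine ⟨i, Finset.mem_univ i, ?_⟩
  simp only [Pi.zero_apply] at hi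
  omega

lemma basisOf_ne_zero {m : ℕ} (v : Fin m → Fin 2) (i : Fin m) : basisOf v i ≠ 0 := by
  by_cases h : (supp v).Nonempty
  · rw [basisOf, dif_pos h]
    split_ifs <;> decide
  · rw [basisOf, dif_neg h]
    decide

lemma basisOf_core {m : ℕ} (v1 v2 : Fin m → Fin 2) (k1 k2 : Fin m) (c1 c2 : Fin 4)
    (hc1 : c1 ≠ 3) (hc2 : c2 ≠ 3)
    (h : ∀ i, (if k1 < i then (3 : Fin 4) else if i < k1 then (if v1 i = 1 then 2 else 1) else c1)
       = (if k2 < i then 3 else if i < k2 then (if v2 i = 1 then 2 else 1) else c2))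
    (hm1 : v1 k1 = 1) (hb1 : ∀ i, k1 < i → v1 i = 0)
    (hm2 : v2 k2 = 1) (hb2 : ∀ i, k2 < i → v2 i = 0) : v1 = v2 := by
  have hkk : k1 = k2 := by
    rcases lt_trichotomy k1 k2 with hlt | he | hlt
    · have hi := h k2
      rw [if_pos hlt, if_neg (lt_irrefl k2), if_neg (lt_irrefl k2)] at hi
      omega
    · exact he
    · have hi := h k1
      rw [if_neg (lt_irrefl k1), if_neg (lt_irrefl k1), if_pos hlt] at hi
      omega
  subst hkk
  funext i
  rcases lt_trichotomy i k1 with hlt | he | hgt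
  · have hi := h i
    rw [if_neg (by omega : ¬ k1 < i), if_pos hlt, if_neg (by omega : ¬ k1 < i),
      if_pos hlt] at hi
    split_ifs at hi with a1 a2 <;>
      first | (rw [a1, a2]) | omega | (rw [fin2_eq_zero _ a1, fin2_eq_zero _ a2])
  · rw [he, hm1, hm2]
  · rw [hb1 i hgt, hb2 i hgt]

lemma basisOf_injOn {m : ℕ} (v1 v2 : Fin m → Fin 2) (h1 : v1 ≠ 0) (h2 : v2 ≠ 0)
    (h : basisOf v1 = basisOf v2) : v1 = v2 := by
  have hn1 := supp_nonempty h1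
  have hn2 := supp_nonempty h2
  have hm1 : v1 ((supp v1).max' hn1) = 1 := by
    have := (supp v1).max'_mem hn1
    simpa [supp] using this
  have hm2 : v2 ((supp v2).max' hn2) = 1 := by
    have := (supp v2).max'_mem hn2
    simpa [supp] using this
  have hb1 : ∀ i, (supp v1).max' hn1 < i → v1 i = 0 := by
    intro i hgt
    by_contra hne
    have hmem : i ∈ supp v1 := by
      simp only [supp, Finset.mem_filter]; exact ⟨mem_univ i, by omega⟩
    have := Finset.le_max' _ i hmem
    omega
  have hb2 : ∀ i, (supp v2).max' hn2 < i → v2 i = 0 := by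
    intro i hgt
    by_contra hne
    have hmem : i ∈ supp v2 := by
      simp only [supp, Finset.mem_filter]; exact ⟨mem_univ i, by omega⟩
    have := Finset.le_max' _ i hmem
    omega
  rw [basisOf, dif_pos hn1, basisOf, dif_pos hn2] at h
  have hc1 : (if Even (supp v1).card then (2:Fin 4) else 1) ≠ 3 := by split_ifs <;> decide
  have hc2 : (if Even (supp v2).card then (2:Fin 4) else 1) ≠ 3 := by split_ifs <;> decide
  exact basisOf_core v1 v2 _ _ _ _ hc1 hc2 (fun i => congrFun h i) hm1 hb1 hm2 hb2

lemma cover_exists {m : ℕ} (s : Fin m → Fin 4) (k : Fin m)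
    (hs : ∀ i, (s i = 1 ∨ s i = 2) ↔ i ≤ k)
    (heven : Even ((univ.filter (fun i => s i = 2)).card)) :
    ∃ v : Fin m → Fin 2, v ≠ 0 ∧ Covers (basisOf v) s := by
  classical
  set v : Fin m → Fin 2 := fun i => if (i < k ∧ s i = 2) ∨ i = k then 1 else 0 with hv
  have hvk : v k = 1 := by simp [hv]
  have hvne : v ≠ 0 := by
    intro h0
    have := congrFun h0 k
    rw [hvk] at this
    simp at this
  have hn := supp_nonempty hvne
  have hsupp : supp v = insert k (univ.filter (fun i => i < k ∧ s i = 2)) := by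
    ext i
    simp only [supp, Finset.mem_filter, Finset.mem_insert, mem_univ, true_and, hv]
    split_ifs with hcond
    · exact ⟨fun _ => by tauto, fun _ => rfl⟩
    · exact ⟨fun h01 => absurd h01 (by decide),
        fun hc => absurd (hc.elim (fun h => Or.inr h) (fun h => Or.inl h)) hcond⟩
  have hmax : (supp v).max' hn = k := by
    apply le_antisymm
    · apply Finset.max'_le
      intro i hi
      rw [hsupp, Finset.mem_insert] at hi
      rcases hi with rfl | hi
      · exact le_refl _
      · rw [Finset.mem_filter] at hi
        exact le_of_lt hi.2.1
    · exact Finset.le_max' _ k (by rw [hsupp]; exact Finset.mem_insert_self _ _)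
  have hknot : k ∉ univ.filter (fun i => i < k ∧ s i = 2) := by
    simp
  have hcard : (supp v).card = (univ.filter (fun i => i < k ∧ s i = 2)).card + 1 := by
    rw [hsupp, Finset.card_insert_of_notMem hknot]
  refine ⟨v, hvne, ?_⟩
  intro i hi0
  rw [basisOf, dif_pos hn, hmax]
  rcases lt_trichotomy i k with hlt | he | hgt
  · rw [if_neg (by omega : ¬ k < i), if_pos hlt]
    have hsi : s i = 1 ∨ s i = 2 := (hs i).mpr (le_of_lt hlt)
    by_cases h2 : s i = 2
    · rw [if_pos (show v i = 1 by rw [hv]; simp only []; rw [if_pos (Or.inl ⟨hlt, h2⟩)]), h2]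
    · have hvi : v i = 0 := by
        rw [hv]; simp only []
        rw [if_neg]
        rintro (⟨-, hc⟩ | rfl)
        · exact h2 hc
        · exact absurd hlt (lt_irrefl _)
      rw [if_neg (by rw [hvi]; decide)]
      rcases hsi with h1 | h1
      · rw [h1]
      · exact absurd h1 h2
  · subst he
    rw [if_neg (lt_irrefl i), if_neg (lt_irrefl i)]
    have hsk : s i = 1 ∨ s i = 2 := (hs i).mpr (le_refl i)
    by_cases hk2 : s i = 2
    · have hset : univ.filter (fun j => s j = 2) =
          insert i (univ.filter (fun j => j < i ∧ s j = 2)) := by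
        ext j
        simp only [Finset.mem_filter, Finset.mem_insert, mem_univ, true_and]
        constructor
        · intro h2
          have hle : j ≤ i := (hs j).mp (Or.inr h2)
          rcases eq_or_lt_of_le hle with rfl | hjlt
          · exact Or.inl rfl
          · exact Or.inr ⟨hjlt, h2⟩
        · rintro (rfl | ⟨-, h2⟩)
          · exact hk2
          · exact h2
      have hEa : Even ((univ.filter (fun j => j < i ∧ s j = 2)).card + 1) := by
        rw [← Finset.card_insert_of_notMem hknot, ← hset]
        exact heven
      rw [if_pos (by rw [hcard]; exact hEa), hk2]
  
    · have hk1 : s i = 1 := by tauto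
      have hset : univ.filter (fun j => s j = 2) =
          univ.filter (fun j => j < i ∧ s j = 2) := by
        ext j
        simp only [Finset.mem_filter, mem_univ, true_and]
        constructor
        · intro h2
          have hle : j ≤ i := (hs j).mp (Or.inr h2)
          rcases eq_or_lt_of_le hle with rfl | hjlt
          · exact absurd h2 hk2
          · exact ⟨hjlt, h2⟩
        · tauto
      have hEa : Even ((univ.filter (fun j => j < i ∧ s j = 2)).card) := by
        rw [← hset]; exact heven
      rw [if_neg (by rw [hcard]; exact fun hE => (Nat.even_add_one.mp hE) hEa), hk1]
  · rw [if_pos hgt]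
    have hno : ¬ (s i = 1 ∨ s i = 2) := fun hh => absurd ((hs i).mp hh) (by omega)
    have : s i = 3 := by omega
    rw [this]

theorem x_measurable_in_d_minus_one_bases (m : ℕ) (hm : 1 ≤ m) :
    ∃ T : Finset (Fin m → Fin 4),
      T.card = 2 ^ m - 1 ∧
      (∀ b ∈ T, ∀ i, b i ≠ 0) ∧
      (∀ s : Fin m → Fin 4,
        Matrix.trace (pauliString s * xEnc m) ≠ 0 → ∃ b ∈ T, Covers b s) := by
  classical
  refine ⟨((univ : Finset (Fin m → Fin 2)).filter (fun v => v ≠ 0)).image basisOf, ?_, ?_, ?_⟩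
  · rw [Finset.card_image_of_injOn]
    · rw [Finset.filter_ne' univ 0, Finset.card_erase_of_mem (mem_univ _), Finset.card_univ]
      simp [Fintype.card_fun]
    · intro v1 hv1 v2 hv2 h
      rw [Finset.mem_coe, Finset.mem_filter] at hv1 hv2
      exact basisOf_injOn v1 v2 hv1.2 hv2.2 h
  · intro b hb i
    rw [Finset.mem_image] at hb
    obtain ⟨v, -, rfl⟩ := hb
    exact basisOf_ne_zero v i
  · intro s htr
    have heven : Even ((univ.filter (fun i => s i = 2)).card) := by
      by_contra ho
      exact htr (trace_zero_of_odd s ho)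
    have hstruct : ∃ k : Fin m, ∀ i, (s i = 1 ∨ s i = 2) ↔ i ≤ k := by
      rw [trace_expand] at htr
      obtain ⟨b, -, hbs⟩ := Finset.exists_ne_zero_of_sum_ne_zero htr
      obtain ⟨b', -, hbb⟩ := Finset.exists_ne_zero_of_sum_ne_zero hbs
      have hps : pauliString s b b' ≠ 0 := left_ne_zero_of_mul hbb
      have hxc : xc (bval b') (bval b) ≠ 0 := right_ne_zero_of_mul hbb
      have hfac : ∀ i, pauli (s i) (b i) (b' i) ≠ 0 := by
        intro i hz
        exact hps (by
          unfold pauliString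
          simp only [Matrix.of_apply]
          exact Finset.prod_eq_zero (mem_univ i) hz)
      have hiff : ∀ i, (s i = 1 ∨ s i = 2) ↔ b i ≠ b' i :=
        fun i => pauli_ne_zero_iff _ _ _ (hfac i)
      rcases xc_ne_zero hxc with h | h
      · obtain ⟨k, hk⟩ := initseg b b' h
        exact ⟨k, fun i => (hiff i).trans (hk i)⟩
      · obtain ⟨k, hk⟩ := initseg b' b h
        exact ⟨k, fun i => (hiff i).trans (ne_comm.trans (hk i))⟩
    obtain ⟨k, hk⟩ := hstruct
    obtain ⟨v, hvne, hcov⟩ := cover_exists s k hk heven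
    exact ⟨basisOf v, Finset.mem_image_of_mem _ (by simp [hvne]), hcov⟩
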